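/- Let y = Mx + e where M satisfies the D-RIP with constants δ_{3ζk} and δ_{(3ζ+1)k} < 1, where x = Dα with α k-sparse supported on T. Let T̃ be an index set with |T̃| ≤ 3ζk and let x_p be the least-squares solution x_p = D(MD_{T̃})^† y. Then ‖x_p − x‖₂ ≤ (1/√(1 − δ_{(3ζ+1)k}²)) ‖Q_{T̃}(x_p − x)‖₂ + (√(1+δ_{3ζk})/(1 − δ_{(3ζ+1)k})) ‖e‖₂. -/

import Mathlib

/-- `P_T`: orthogonal projection of `ℝ^d` onto the span of the columns of `D` indexed by `T`. -/
noncomputable def projSpan {d n : ℕ}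
    (D : EuclideanSpace ℝ (Fin n) →L[ℝ] EuclideanSpace ℝ (Fin d)) (T : Finset (Fin n)) :
    EuclideanSpace ℝ (Fin d) →L[ℝ] EuclideanSpace ℝ (Fin d) :=
  (Submodule.span ℝ ((fun i => D (EuclideanSpace.single i 1)) '' (T : Set (Fin n)))).subtypeL.comp
    (Submodule.orthogonalProjectionOnto _)

lemma span_single_supp {n : ℕ} (T : Finset (Fin n)) (γ : EuclideanSpace ℝ (Fin n))
    (hγ : γ ∈ Submodule.span ℝ ((fun i => (EuclideanSpace.single i (1:ℝ) : EuclideanSpace ℝ (Fin n))) '' (T : Set (Fin n)))) :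
    ∀ i ∉ T, γ i = 0 := by
  induction hγ using Submodule.span_induction with
  | mem x hx =>
      obtain ⟨j, hj, rfl⟩ := hx
      intro i hi
      have hij : i ≠ j := by rintro rfl; exact hi hj
      simp [EuclideanSpace.single_apply, hij]
  | zero => intro i _; rfl
  | add u v _ _ hu hv => intro i hi; have := hu i hi; have := hv i hi; simp_all
  | smul c u _ hu => intro i hi; have := hu i hi; simp_all

lemma projSpan_repr {d n : ℕ}
    (D : EuclideanSpace ℝ (Fin n) →L[ℝ] EuclideanSpace ℝ (Fin d)) (T : Finset (Fin n))
    (v : EuclideanSpace ℝ (Fin d)) :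
    ∃ γ : EuclideanSpace ℝ (Fin n), (∀ i ∉ T, γ i = 0) ∧ D γ = projSpan D T v := by
  have hmem : projSpan D T v ∈
      Submodule.span ℝ ((fun i => D (EuclideanSpace.single i 1)) '' (T : Set (Fin n))) :=
    (Submodule.orthogonalProjectionOnto _ v).2
  have himg : ((fun i => D (EuclideanSpace.single i 1)) '' (T : Set (Fin n)))
      = ⇑D '' ((fun i => (EuclideanSpace.single i (1:ℝ) : EuclideanSpace ℝ (Fin n))) '' (T : Set (Fin n))) := by
    rw [Set.image_image]
  rw [himg] at hmem
  rw [← ContinuousLinearMap.coe_coe D, Submodule.span_image] at hmem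
  obtain ⟨γ, hγ, hDγ⟩ := hmem
  exact ⟨γ, span_single_supp T γ hγ, hDγ⟩

lemma projSpan_inner_eq_zero {d n : ℕ}
    (D : EuclideanSpace ℝ (Fin n) →L[ℝ] EuclideanSpace ℝ (Fin d)) (T : Finset (Fin n))
    (v w : EuclideanSpace ℝ (Fin d))
    (hw : w ∈ Submodule.span ℝ ((fun i => D (EuclideanSpace.single i 1)) '' (T : Set (Fin n)))) :
    (inner ℝ (v - projSpan D T v) w : ℝ) = 0 :=
  Submodule.starProjection_inner_eq_zero v w hw

lemma rip_inner_half {d n m N : ℕ} (δ : ℝ)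
    (D : EuclideanSpace ℝ (Fin n) →L[ℝ] EuclideanSpace ℝ (Fin d))
    (M : EuclideanSpace ℝ (Fin d) →L[ℝ] EuclideanSpace ℝ (Fin m))
    (hRIP : ∀ β : EuclideanSpace ℝ (Fin n),
      (∃ s : Finset (Fin n), s.card ≤ N ∧ ∀ i ∉ s, β i = 0) →
      (1 - δ) * ‖D β‖ ^ 2 ≤ ‖M (D β)‖ ^ 2 ∧ ‖M (D β)‖ ^ 2 ≤ (1 + δ) * ‖D β‖ ^ 2)
    (S : Finset (Fin n)) (hS : S.card ≤ N)
    (γ β : EuclideanSpace ℝ (Fin n)) (hγ : ∀ i ∉ S, γ i = 0) (hβ : ∀ i ∉ S, β i = 0) :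
    (inner ℝ (M (D γ)) (M (D β)) : ℝ) - inner ℝ (D γ) (D β)
      ≤ δ * (‖D γ‖ ^ 2 + ‖D β‖ ^ 2) / 2 := by
  have hadd := hRIP (γ + β) ⟨S, hS, fun i hi => by simp [hγ i hi, hβ i hi]⟩
  have hsub := hRIP (γ - β) ⟨S, hS, fun i hi => by simp [hγ i hi, hβ i hi]⟩
  rw [map_add] at hadd
  rw [map_sub] at hsub
  rw [map_add M] at hadd
  rw [map_sub M] at hsub
  have e1 := norm_add_sq_real (D γ) (D β)
  have e2 := norm_sub_sq_real (D γ) (D β)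
  have e3 := norm_add_sq_real (M (D γ)) (M (D β))
  have e4 := norm_sub_sq_real (M (D γ)) (M (D β))
  have h2 := hadd.2
  have h1 := hsub.1
  rw [e3, e1] at h2
  rw [e4, e2] at h1
  ring_nf at h1 h2 ⊢
  linarith

lemma rip_inner {d n m N : ℕ} (δ : ℝ)
    (D : EuclideanSpace ℝ (Fin n) →L[ℝ] EuclideanSpace ℝ (Fin d))
    (M : EuclideanSpace ℝ (Fin d) →L[ℝ] EuclideanSpace ℝ (Fin m))
    (hRIP : ∀ β : EuclideanSpace ℝ (Fin n),
      (∃ s : Finset (Fin n), s.card ≤ N ∧ ∀ i ∉ s, β i = 0) →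
      (1 - δ) * ‖D β‖ ^ 2 ≤ ‖M (D β)‖ ^ 2 ∧ ‖M (D β)‖ ^ 2 ≤ (1 + δ) * ‖D β‖ ^ 2)
    (S : Finset (Fin n)) (hS : S.card ≤ N)
    (γ β : EuclideanSpace ℝ (Fin n)) (hγ : ∀ i ∉ S, γ i = 0) (hβ : ∀ i ∉ S, β i = 0) :
    |(inner ℝ (M (D γ)) (M (D β)) : ℝ) - inner ℝ (D γ) (D β)| ≤ δ * (‖D γ‖ * ‖D β‖) := by
  by_cases hv : D γ = 0
  · simp [hv]
  by_cases hw : D β = 0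
  · simp [hw]
  have hv' : (0:ℝ) < ‖D γ‖ := norm_pos_iff.2 hv
  have hw' : (0:ℝ) < ‖D β‖ := norm_pos_iff.2 hw
  set a := ‖D γ‖
  set b := ‖D β‖
  have hγ' : ∀ i ∉ S, (a⁻¹ • γ) i = 0 := fun i hi => by simp [hγ i hi]
  have hβ' : ∀ i ∉ S, (b⁻¹ • β) i = 0 := fun i hi => by simp [hβ i hi]
  have hβ'' : ∀ i ∉ S, (-(b⁻¹ • β)) i = 0 := fun i hi => by simp [hβ i hi]
  have h1 := rip_inner_half δ D M hRIP S hS (a⁻¹ • γ) (b⁻¹ • β) hγ' hβ'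
  have h2 := rip_inner_half δ D M hRIP S hS (a⁻¹ • γ) (-(b⁻¹ • β)) hγ' hβ''
  have hna : ‖a⁻¹‖ = a⁻¹ := by
    rw [Real.norm_eq_abs, abs_of_pos (inv_pos.2 hv')]
  have hnb : ‖b⁻¹‖ = b⁻¹ := by
    rw [Real.norm_eq_abs, abs_of_pos (inv_pos.2 hw')]
  simp only [map_smul, map_neg, inner_neg_right, norm_neg, norm_smul,
    real_inner_smul_left, real_inner_smul_right, hna, hnb] at h1 h2
  have e5 : a⁻¹ * ‖D γ‖ = 1 := inv_mul_cancel₀ (ne_of_gt hv')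
  have e6 : b⁻¹ * ‖D β‖ = 1 := inv_mul_cancel₀ (ne_of_gt hw')
  rw [e5, e6] at h1 h2
  simp only [one_pow] at h1 h2
  have hδδ : δ * ((1:ℝ) + 1) / 2 = δ := by ring
  rw [hδδ] at h1 h2
  have hab : (0:ℝ) ≤ a * b := le_of_lt (mul_pos hv' hw')
  have hred : ∀ X : ℝ, a * b * (b⁻¹ * (a⁻¹ * X)) = X := by
    intro X
    field_simp
  have h1' := mul_le_mul_of_nonneg_left h1 hab
  have h2' := mul_le_mul_of_nonneg_left h2 hab
  rw [mul_sub, hred, hred] at h1'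
  rw [mul_sub, mul_neg, mul_neg, hred, hred] at h2'
  rw [abs_le]
  constructor <;> linarith [h1', h2']


set_option maxHeartbeats 2000000 in
/-- Lemma (SSCoSaMP_xp_bound): if `y = Mx + e`, `M` satisfies the `D`-RIP of orders `3ζk` and
`(3ζ+1)k` with constants `δ₃, δ₃₁ < 1`, `x = Dα` with `α` `k`-sparse, `|T̃| ≤ 3ζk` and `x_p`
is the least-squares solution over support `T̃`, then
`‖x_p − x‖ ≤ ‖Q_{T̃}(x_p − x)‖/√(1−δ₃₁²) + √(1+δ₃)‖e‖/(1−δ₃₁)`, where `Q_{T̃} = I − P_{T̃}`. -/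
theorem stmt10 {d n m k ζ : ℕ} (δ3 δ31 : ℝ) (hδ31 : δ31 < 1)
    (D : EuclideanSpace ℝ (Fin n) →L[ℝ] EuclideanSpace ℝ (Fin d))
    (M : EuclideanSpace ℝ (Fin d) →L[ℝ] EuclideanSpace ℝ (Fin m))
    (hRIP3 : ∀ β : EuclideanSpace ℝ (Fin n),
      (∃ s : Finset (Fin n), s.card ≤ 3 * ζ * k ∧ ∀ i ∉ s, β i = 0) →
      (1 - δ3) * ‖D β‖ ^ 2 ≤ ‖M (D β)‖ ^ 2 ∧ ‖M (D β)‖ ^ 2 ≤ (1 + δ3) * ‖D β‖ ^ 2)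
    (hRIP31 : ∀ β : EuclideanSpace ℝ (Fin n),
      (∃ s : Finset (Fin n), s.card ≤ (3 * ζ + 1) * k ∧ ∀ i ∉ s, β i = 0) →
      (1 - δ31) * ‖D β‖ ^ 2 ≤ ‖M (D β)‖ ^ 2 ∧ ‖M (D β)‖ ^ 2 ≤ (1 + δ31) * ‖D β‖ ^ 2)
    (x xp : EuclideanSpace ℝ (Fin d)) (y e : EuclideanSpace ℝ (Fin m))
    (α αp : EuclideanSpace ℝ (Fin n)) (T Ttil : Finset (Fin n))
    (hT : T.card ≤ k) (hαsupp : ∀ i ∉ T, α i = 0) (hx : x = D α)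
    (hTtil : Ttil.card ≤ 3 * ζ * k)
    (hαpsupp : ∀ i ∉ Ttil, αp i = 0) (hxp : xp = D αp)
    (hmin : ∀ αt : EuclideanSpace ℝ (Fin n), (∀ i ∉ Ttil, αt i = 0) →
      ‖y - M xp‖ ≤ ‖y - M (D αt)‖)
    (hy : y = M x + e) :
    ‖xp - x‖ ≤ (1 / Real.sqrt (1 - δ31 ^ 2)) * ‖(xp - x) - projSpan D Ttil (xp - x)‖ +
      (Real.sqrt (1 + δ3) / (1 - δ31)) * ‖e‖ := by

  have h1δ : (0:ℝ) < 1 - δ31 := by linarith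
  set u : EuclideanSpace ℝ (Fin d) := xp - x with hu
  by_cases hu0 : u = 0
  · rw [hu0]
    simp only [map_zero, sub_zero, norm_zero, mul_zero, zero_add]
    positivity
  have hβu : u = D (αp - α) := by rw [hu, hxp, hx, map_sub]
  have hsupp : ∀ i ∉ Ttil ∪ T, (αp - α) i = 0 := by
    intro i hi
    have h1 := hαpsupp i (fun h => hi (Finset.mem_union_left _ h))
    have h2 := hαsupp i (fun h => hi (Finset.mem_union_right _ h))
    show αp i - α i = 0
    rw [h1, h2, sub_zero]
  have hcard : (Ttil ∪ T).card ≤ (3 * ζ + 1) * k := by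
    calc (Ttil ∪ T).card ≤ Ttil.card + T.card := Finset.card_union_le _ _
    _ ≤ 3 * ζ * k + k := add_le_add hTtil hT
    _ = (3 * ζ + 1) * k := by ring
  have hnu : (0:ℝ) < ‖u‖ := norm_pos_iff.2 hu0
  have hδ0 : 0 ≤ δ31 := by
    obtain ⟨l, r⟩ := hRIP31 (αp - α) ⟨Ttil ∪ T, hcard, hsupp⟩
    rw [← hβu] at l r
    nlinarith [mul_pos hnu hnu]
  -- representation of the projection
  obtain ⟨γ, hγsupp, hγ⟩ := projSpan_repr D Ttil u
  -- least-squares orthogonality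
  have horth : ∀ γ' : EuclideanSpace ℝ (Fin n), (∀ i ∉ Ttil, γ' i = 0) →
      (inner ℝ (y - M xp) (M (D γ')) : ℝ) = 0 := by
    intro γ' hγ'
    by_cases hw : M (D γ') = 0
    · rw [hw, inner_zero_right]
    set w := M (D γ') with hwdef
    set c : ℝ := inner ℝ (y - M xp) w with hc
    have hwn : (0:ℝ) < ‖w‖ := norm_pos_iff.2 hw
    have hw2 : (0:ℝ) < ‖w‖ ^ 2 := by positivity
    have key : ∀ t : ℝ, 0 ≤ -(2 * (t * c)) + t ^ 2 * ‖w‖ ^ 2 := by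
      intro t
      have hsup : ∀ i ∉ Ttil, (αp + t • γ') i = 0 := by
        intro i hi
        show αp i + (t • γ') i = 0
        have : (t • γ') i = t * γ' i := rfl
        rw [this, hαpsupp i hi, hγ' i hi, mul_zero, add_zero]
      have hm := hmin (αp + t • γ') hsup
      have hexp : y - M (D (αp + t • γ')) = (y - M xp) - t • w := by
        rw [map_add, map_smul, map_add, map_smul, ← hxp, ← hwdef]
        abel
      rw [hexp] at hm
      have hsq : ‖y - M xp‖ ^ 2 ≤ ‖y - M xp - t • w‖ ^ 2 :=
        pow_le_pow_left₀ (norm_nonneg _) hm 2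
      have hexp2 : ‖y - M xp - t • w‖ ^ 2
          = ‖y - M xp‖ ^ 2 - 2 * (t * c) + t ^ 2 * ‖w‖ ^ 2 := by
        rw [norm_sub_sq_real (y - M xp) (t • w), real_inner_smul_right, ← hc, norm_smul,
          Real.norm_eq_abs, mul_pow, sq_abs]
      rw [hexp2] at hsq
      linarith
    have h := key (c / ‖w‖ ^ 2)
    have hc2 : c ^ 2 ≤ 0 := by
      have hid : -(2 * (c / ‖w‖ ^ 2 * c)) + (c / ‖w‖ ^ 2) ^ 2 * ‖w‖ ^ 2
          = -(c ^ 2) / ‖w‖ ^ 2 := by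
        field_simp
        ring
      rw [hid] at h
      have h3 : -(c ^ 2) / ‖w‖ ^ 2 * ‖w‖ ^ 2 = -(c ^ 2) :=
        div_mul_cancel₀ _ (ne_of_gt hw2)
      have h4 := mul_nonneg h (le_of_lt hw2)
      rw [h3] at h4
      linarith
    have : c ^ 2 = 0 := le_antisymm hc2 (sq_nonneg c)
    exact pow_eq_zero_iff (by norm_num) |>.1 this
  -- inner products with Pu
  have hMu : M u = e - (y - M xp) := by
    rw [hu, map_sub, hy]
    abel
  have hinner : (inner ℝ (M (D γ)) (M u) : ℝ) = inner ℝ (M (D γ)) e := by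
    rw [hMu, inner_sub_right]
    have h0 : (inner ℝ (M (D γ)) (y - M xp) : ℝ) = 0 := by
      rw [real_inner_comm]
      exact horth γ hγsupp
    rw [h0, sub_zero]
  -- polarization bound
  have hγsupp' : ∀ i ∉ Ttil ∪ T, γ i = 0 :=
    fun i hi => hγsupp i (fun h => hi (Finset.mem_union_left _ h))
  have hpol := rip_inner δ31 D M hRIP31 (Ttil ∪ T) hcard γ (αp - α) hγsupp' hsupp
  rw [← hβu, hγ] at hpol
  -- inner Pu u = ‖Pu‖²
  have hPmem : projSpan D Ttil u ∈
      Submodule.span ℝ ((fun i => D (EuclideanSpace.single i 1)) '' (Ttil : Set (Fin n))) :=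
    (Submodule.orthogonalProjectionOnto _ u).2
  have horthP : (inner ℝ (u - projSpan D Ttil u) (projSpan D Ttil u) : ℝ) = 0 :=
    projSpan_inner_eq_zero D Ttil u _ hPmem
  have hPuU : (inner ℝ (projSpan D Ttil u) u : ℝ) = ‖projSpan D Ttil u‖ ^ 2 := by
    have h1 : (inner ℝ (projSpan D Ttil u) u : ℝ)
        = inner ℝ (projSpan D Ttil u) (u - projSpan D Ttil u)
          + inner ℝ (projSpan D Ttil u) (projSpan D Ttil u) := by
      rw [← inner_add_right]
      congr 1
      abel
    rw [h1, real_inner_comm, horthP, zero_add, real_inner_self_eq_norm_sq]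
  -- ‖M Pu‖ ≤ √(1+δ3) ‖Pu‖
  have hMP := (hRIP3 γ ⟨Ttil, hTtil, hγsupp⟩).2
  rw [hγ] at hMP
  have hMPn : ‖M (projSpan D Ttil u)‖ ≤ Real.sqrt (1 + δ3) * ‖projSpan D Ttil u‖ := by
    by_cases hP0 : ‖projSpan D Ttil u‖ = 0
    · rw [hP0] at hMP ⊢
      have : ‖M (projSpan D Ttil u)‖ ^ 2 ≤ 0 := by linarith [hMP]
      nlinarith [norm_nonneg (M (projSpan D Ttil u)), Real.sqrt_nonneg (1 + δ3)]
    · have hPpos : (0:ℝ) < ‖projSpan D Ttil u‖ :=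
        lt_of_le_of_ne (norm_nonneg _) (Ne.symm hP0)
      have hδ3 : 0 ≤ 1 + δ3 := by
        nlinarith [sq_nonneg ‖M (projSpan D Ttil u)‖, mul_pos hPpos hPpos]
      calc ‖M (projSpan D Ttil u)‖
          = Real.sqrt (‖M (projSpan D Ttil u)‖ ^ 2) :=
            (Real.sqrt_sq (norm_nonneg _)).symm
        _ ≤ Real.sqrt ((1 + δ3) * ‖projSpan D Ttil u‖ ^ 2) := Real.sqrt_le_sqrt hMP
        _ = Real.sqrt (1 + δ3) * ‖projSpan D Ttil u‖ := by
            rw [Real.sqrt_mul hδ3, Real.sqrt_sq (norm_nonneg _)]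
  -- key bound ‖Pu‖ ≤ δ31‖u‖ + C
  set C : ℝ := Real.sqrt (1 + δ3) * ‖e‖ with hCdef
  have hC0 : 0 ≤ C := mul_nonneg (Real.sqrt_nonneg _) (norm_nonneg _)
  have hPbound : ‖projSpan D Ttil u‖ ≤ δ31 * ‖u‖ + C := by
    have hCS : (inner ℝ (M (projSpan D Ttil u)) e : ℝ) ≤ ‖M (projSpan D Ttil u)‖ * ‖e‖ :=
      real_inner_le_norm _ _
    have hinner' : (inner ℝ (M (projSpan D Ttil u)) (M u) : ℝ)
        = inner ℝ (M (projSpan D Ttil u)) e := by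
      rw [← hγ]; exact hinner
    have habs := abs_le.1 hpol
    have hmain : ‖projSpan D Ttil u‖ ^ 2
        ≤ δ31 * (‖projSpan D Ttil u‖ * ‖u‖) + ‖projSpan D Ttil u‖ * C := by
      have hMe : ‖M (projSpan D Ttil u)‖ * ‖e‖ ≤ ‖projSpan D Ttil u‖ * C := by
        rw [hCdef]
        calc ‖M (projSpan D Ttil u)‖ * ‖e‖
            ≤ (Real.sqrt (1 + δ3) * ‖projSpan D Ttil u‖) * ‖e‖ :=
              mul_le_mul_of_nonneg_right hMPn (norm_nonneg _)
          _ = ‖projSpan D Ttil u‖ * (Real.sqrt (1 + δ3) * ‖e‖) := by ring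
      calc ‖projSpan D Ttil u‖ ^ 2 = inner ℝ (projSpan D Ttil u) u := hPuU.symm
        _ ≤ inner ℝ (M (projSpan D Ttil u)) (M u) + δ31 * (‖projSpan D Ttil u‖ * ‖u‖) := by
            linarith [habs.1]
        _ = inner ℝ (M (projSpan D Ttil u)) e + δ31 * (‖projSpan D Ttil u‖ * ‖u‖) := by
            rw [hinner']
        _ ≤ ‖M (projSpan D Ttil u)‖ * ‖e‖ + δ31 * (‖projSpan D Ttil u‖ * ‖u‖) := by
            linarith [hCS]
        _ ≤ δ31 * (‖projSpan D Ttil u‖ * ‖u‖) + ‖projSpan D Ttil u‖ * C := by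
            linarith [hMe]
    by_cases hP0 : ‖projSpan D Ttil u‖ = 0
    · rw [hP0]
      positivity
    · have hPpos : (0:ℝ) < ‖projSpan D Ttil u‖ :=
        lt_of_le_of_ne (norm_nonneg _) (Ne.symm hP0)
      nlinarith [hmain]
  -- Pythagoras
  have hpyth : ‖u‖ ^ 2 = ‖projSpan D Ttil u‖ ^ 2 + ‖u - projSpan D Ttil u‖ ^ 2 := by
    have h1 : u = (u - projSpan D Ttil u) + projSpan D Ttil u := by abel
    calc ‖u‖ ^ 2 = ‖(u - projSpan D Ttil u) + projSpan D Ttil u‖ ^ 2 := by rw [← h1]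
      _ = ‖u - projSpan D Ttil u‖ ^ 2 + 2 * inner ℝ (u - projSpan D Ttil u) (projSpan D Ttil u)
          + ‖projSpan D Ttil u‖ ^ 2 := norm_add_sq_real _ _
      _ = ‖projSpan D Ttil u‖ ^ 2 + ‖u - projSpan D Ttil u‖ ^ 2 := by
          rw [horthP]; ring
  -- final algebra
  set a : ℝ := ‖u‖
  set b : ℝ := ‖u - projSpan D Ttil u‖
  have hb0 : 0 ≤ b := norm_nonneg _
  have ha2 : a ^ 2 ≤ b ^ 2 + (δ31 * a + C) ^ 2 := by
    have hPle : ‖projSpan D Ttil u‖ ^ 2 ≤ (δ31 * a + C) ^ 2 := by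
      have h1 : 0 ≤ δ31 * a + C := by positivity
      nlinarith [hPbound, norm_nonneg (projSpan D Ttil u)]
    linarith [hpyth]
  have hδsq : (0:ℝ) < 1 - δ31 ^ 2 := by nlinarith
  set s : ℝ := Real.sqrt (1 - δ31 ^ 2) with hsdef
  have hs0 : 0 < s := Real.sqrt_pos.2 hδsq
  have hs2 : s ^ 2 = 1 - δ31 ^ 2 := Real.sq_sqrt (le_of_lt hδsq)
  have hgoal2 : Real.sqrt (1 + δ3) / (1 - δ31) * ‖e‖ = C / (1 - δ31) := by
    rw [hCdef]; ring
  rw [hgoal2]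
  rcases le_or_gt (a * (1 - δ31)) C with hcase | hcase
  · have h1 : a ≤ C / (1 - δ31) := by
      rw [le_div_iff₀ h1δ]
      linarith [hcase]
    have h2 : 0 ≤ 1 / s * b := by positivity
    linarith
  · set xq : ℝ := a * (1 - δ31) - C with hxq
    have hxpos : 0 < xq := by rw [hxq]; linarith
    have hb2 : xq * (a * (1 + δ31) + C) ≤ b ^ 2 := by nlinarith [ha2]
    have h7 : (1 + δ31) * xq ≤ (1 - δ31) * (a * (1 + δ31) + C) := by
      rw [hxq]; nlinarith
    have hsq2 : (s * xq) ^ 2 ≤ (b * (1 - δ31)) ^ 2 := by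
      have e1 : (s * xq) ^ 2 = (1 - δ31) * xq * ((1 + δ31) * xq) := by
        rw [mul_pow, hs2]; ring
      have e2 : (1 - δ31) * xq * ((1 + δ31) * xq)
          ≤ (1 - δ31) * xq * ((1 - δ31) * (a * (1 + δ31) + C)) :=
        mul_le_mul_of_nonneg_left h7 (by positivity)
      have e3 : (1 - δ31) * xq * ((1 - δ31) * (a * (1 + δ31) + C))
          = (1 - δ31) ^ 2 * (xq * (a * (1 + δ31) + C)) := by ring
      have e4 : (1 - δ31) ^ 2 * (xq * (a * (1 + δ31) + C)) ≤ (1 - δ31) ^ 2 * b ^ 2 :=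
        mul_le_mul_of_nonneg_left hb2 (sq_nonneg _)
      calc (s * xq) ^ 2 = (1 - δ31) * xq * ((1 + δ31) * xq) := e1
        _ ≤ (1 - δ31) ^ 2 * b ^ 2 := by linarith
        _ = (b * (1 - δ31)) ^ 2 := by ring
    have hsx : s * xq ≤ b * (1 - δ31) := by
      have h1 : s * xq = Real.sqrt ((s * xq) ^ 2) :=
        (Real.sqrt_sq (by positivity)).symm
      have h2 : Real.sqrt ((s * xq) ^ 2) ≤ Real.sqrt ((b * (1 - δ31)) ^ 2) :=
        Real.sqrt_le_sqrt hsq2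
      have h3 : Real.sqrt ((b * (1 - δ31)) ^ 2) = b * (1 - δ31) :=
        Real.sqrt_sq (by positivity)
      linarith
    -- conclude
    have hfinal : a * (s * (1 - δ31)) ≤ b * (1 - δ31) + C * s := by
      have : s * (a * (1 - δ31) - C) ≤ b * (1 - δ31) := by rw [← hxq]; exact hsx
      nlinarith [this, hs0]
    have heq : 1 / s * b + C / (1 - δ31) = (b * (1 - δ31) + C * s) / (s * (1 - δ31)) := by
      field_simp
    rw [heq, le_div_iff₀ (by positivity)]
    exact hfinal
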